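/- Let (a_r, b_r) ∈ Δ_C × Δ_C for r = 1, …, n be such that for every j ∈ {1,…,C} the C×C matrix Σ_{r=1}^n a_{rj} b_r b_r' is symmetric positive definite. Then the function M̃ ↦ Σ_{r=1}^n D_KL(a_r ‖ M'b_r) is strictly convex on the convex open set U of C×(C−1) matrices M̃ whose completion M (with M_{iC} = 1 − Σ_{j<C} M_{ij}) has all entries strictly positive. -/

import Mathlib

open MeasureTheory ProbabilityTheory Filter Finset
open scoped ENNReal NNReal BigOperators

noncomputable section

namespace GBQL

/-- The probability simplex Δ_C in ℝ^C. -/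
def simplex (C : ℕ) : Set (Fin C → ℝ) :=
  {x | (∀ i, 0 ≤ x i) ∧ ∑ i, x i = 1}

/-- A C×C matrix (as a function) is row-stochastic. -/
def rowStochastic {C : ℕ} (M : Fin C → Fin C → ℝ) : Prop :=
  (∀ i j, 0 ≤ M i j) ∧ ∀ i, ∑ j, M i j = 1

/-- M' x, the transpose of M applied to x : (M'x)_j = Σ_i M_{ij} x_i. -/
def mtv {C : ℕ} (M : Fin C → Fin C → ℝ) (x : Fin C → ℝ) : Fin C → ℝ :=
  fun j => ∑ i, M i j * x i

open scoped Classical in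
/-- Kullback–Leibler divergence D_KL(p‖q) = Σ_j p_j log(p_j/q_j) as an element of [0,∞],
with conventions 0·log(0/x) = 0 and p_j log(p_j/0) = ∞ for p_j > 0. -/
def klDiv {C : ℕ} (p q : Fin C → ℝ) : ℝ≥0∞ :=
  if ∃ j, 0 < p j ∧ q j = 0 then ⊤
  else ENNReal.ofReal (∑ j, if p j = 0 then 0 else p j * Real.log (p j / q j))

/-- Real-valued Kullback–Leibler divergence (agreeing with `klDiv` whenever `q` has
strictly positive entries). -/
def klReal {C : ℕ} (p q : Fin C → ℝ) : ℝ :=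
  ∑ j, if p j = 0 then 0 else p j * Real.log (p j / q j)

/-- Completion of a C×(C−1) matrix M̃ to a C×C matrix M with M_{iC} = 1 − Σ_{j<C} M_{ij}. -/
def completeM {c : ℕ} (Mt : Fin (c+1) → Fin c → ℝ) : Fin (c+1) → Fin (c+1) → ℝ :=
  fun i j => if h : (j : ℕ) < c then Mt i ⟨j, h⟩ else 1 - ∑ k, Mt i k

/-- Completion of p̃ ∈ ℝ^{C−1} to p ∈ ℝ^C with p_C = 1 − Σ_{i<C} p_i. -/
def completeV {c : ℕ} (pt : Fin c → ℝ) : Fin (c+1) → ℝ :=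
  fun i => if h : (i : ℕ) < c then pt ⟨i, h⟩ else 1 - ∑ k, pt k

/-- The first C−1 columns of a C×C matrix. -/
def truncM {c : ℕ} (M : Fin (c+1) → Fin (c+1) → ℝ) : Fin (c+1) → Fin c → ℝ :=
  fun i j => M i (Fin.castSucc j)

/-- The first C−1 coordinates of a vector in ℝ^C. -/
def truncV {c : ℕ} (p : Fin (c+1) → ℝ) : Fin c → ℝ := fun i => p (Fin.castSucc i)

/-- The parameter space: θ = (M̃, p̃). -/
abbrev Param (c : ℕ) := (Fin (c+1) → Fin c → ℝ) × (Fin c → ℝ)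

/-- S_d = {x ∈ ℝ^d : x_i ≥ 0, Σ_i x_i ≤ 1}. -/
def Sset (d : ℕ) : Set (Fin d → ℝ) := {x | (∀ i, 0 ≤ x i) ∧ ∑ i, x i ≤ 1}

/-- Θ = (S_{C−1})^C × S_{C−1}. -/
def Theta (c : ℕ) : Set (Param c) := {θ | (∀ i, θ.1 i ∈ Sset c) ∧ θ.2 ∈ Sset c}

/-- ℓ1 distance on the concatenated coordinates of θ. -/
def l1dist {c : ℕ} (θ θ' : Param c) : ℝ :=
  (∑ i, ∑ j, |θ.1 i j - θ'.1 i j|) + ∑ i, |θ.2 i - θ'.2 i|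

/-- The empirical loss f_N(θ), valued in [0,∞]. -/
def fN {c : ℕ} (N n : ℕ) (aU aL bL : ℕ → Fin (c+1) → ℝ) (θ : Param c) : ℝ≥0∞ :=
  ((∑ r ∈ Finset.range N, klDiv (aU r) (mtv (completeM θ.1) (completeV θ.2))) +
    ∑ r ∈ Finset.range n, klDiv (aL r) (mtv (completeM θ.1) (bL r))) / (N : ℝ≥0∞)

/-- The empirical loss f_N(θ), real-valued version (valid near interior points). -/
def fNreal {c : ℕ} (N n : ℕ) (aU aL bL : ℕ → Fin (c+1) → ℝ) (θ : Param c) : ℝ :=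
  ((∑ r ∈ Finset.range N, klReal (aU r) (mtv (completeM θ.1) (completeV θ.2))) +
    ∑ r ∈ Finset.range n, klReal (aL r) (mtv (completeM θ.1) (bL r))) / (N : ℝ)

/-- exp(−x) for x ∈ [0,∞], with exp(−∞) = 0. -/
def expNeg (x : ℝ≥0∞) : ℝ≥0∞ :=
  if x = ⊤ then 0 else ENNReal.ofReal (Real.exp (-x.toReal))

/-- The extended logarithm [0,∞] → [−∞,∞]. -/
def elog (x : ℝ≥0∞) : EReal :=
  if x = 0 then ⊥ else if x = ⊤ then ⊤ else ((Real.log x.toReal : ℝ) : EReal)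

/-- Index set for the coordinates of θ = (M̃, p̃): pairs (i,j) for M̃ entries and i for p̃. -/
abbrev Idx (c : ℕ) := (Fin (c+1) × Fin c) ⊕ Fin c

/-- Coordinates of θ as a vector indexed by `Idx c`. -/
def vecParam {c : ℕ} (θ : Param c) : Idx c → ℝ :=
  Sum.elim (fun ij => θ.1 ij.1 ij.2) (fun i => θ.2 i)

/-- Standard basis vectors of the parameter space, indexed by `Idx c`. -/
def basisP (c : ℕ) : Idx c → Param c :=
  Sum.elim (fun ij => (fun i j => if i = ij.1 ∧ j = ij.2 then 1 else 0, 0))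
    (fun i0 => (0, fun i => if i = i0 then 1 else 0))


lemma completeM_comb {c : ℕ} (t s : ℝ) (hts : t + s = 1)
    (x y : Fin (c+1) → Fin c → ℝ) (i : Fin (c+1)) (j : Fin (c+1)) :
    completeM (t • x + s • y) i j = t * completeM x i j + s * completeM y i j := by
  unfold completeM
  split_ifs with h
  · simp [Pi.smul_apply, smul_eq_mul]
  · simp only [Pi.add_apply, Pi.smul_apply, smul_eq_mul]
    rw [Finset.sum_add_distrib, ← Finset.mul_sum, ← Finset.mul_sum]
    linear_combination (-1 : ℝ) * hts

lemma mtv_comb {c : ℕ} (t s : ℝ) (hts : t + s = 1)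
    (x y : Fin (c+1) → Fin c → ℝ) (v : Fin (c+1) → ℝ) (j : Fin (c+1)) :
    mtv (completeM (t • x + s • y)) v j
      = t * mtv (completeM x) v j + s * mtv (completeM y) v j := by
  unfold mtv
  rw [Finset.mul_sum, Finset.mul_sum, ← Finset.sum_add_distrib]
  refine Finset.sum_congr rfl fun i _ => ?_
  rw [completeM_comb t s hts]
  ring

lemma mtv_pos {c : ℕ} {Mt : Fin (c+1) → Fin c → ℝ}
    (hM : ∀ i j, 0 < completeM Mt i j) {v : Fin (c+1) → ℝ}
    (hv : ∀ i, 0 ≤ v i) (hv1 : ∑ i, v i = 1) (j : Fin (c+1)) :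
    0 < mtv (completeM Mt) v j := by
  obtain ⟨i0, -, hi0⟩ : ∃ i ∈ Finset.univ, (0 : ℝ) < v i := by
    by_contra hcon
    push_neg at hcon
    have : ∑ i, v i = 0 :=
      Finset.sum_eq_zero fun i hi => le_antisymm (hcon i hi) (hv i)
    rw [hv1] at this; norm_num at this
  refine Finset.sum_pos' (fun i _ => mul_nonneg (hM i j).le (hv i)) ⟨i0, Finset.mem_univ i0,
    mul_pos (hM i0 j) hi0⟩

lemma klTerm_le {p u v t s : ℝ} (hp : 0 ≤ p) (hu : 0 < u) (hv : 0 < v)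
    (ht : 0 < t) (hs : 0 < s) (hts : t + s = 1) :
    (if p = 0 then 0 else p * Real.log (p / (t * u + s * v)))
      ≤ t * (if p = 0 then 0 else p * Real.log (p / u))
        + s * (if p = 0 then 0 else p * Real.log (p / v)) := by
  by_cases hp0 : p = 0
  · simp [hp0]
  · have hw : 0 < t * u + s * v := by positivity
    have key : t * Real.log u + s * Real.log v ≤ Real.log (t * u + s * v) := by
      have := strictConcaveOn_log_Ioi.concaveOn.2 (Set.mem_Ioi.mpr hu)
        (Set.mem_Ioi.mpr hv) ht.le hs.le hts
      simpa [smul_eq_mul] using this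
    have h2 : p * (t * Real.log u + s * Real.log v) ≤ p * Real.log (t * u + s * v) :=
      mul_le_mul_of_nonneg_left key hp
    rw [if_neg hp0, if_neg hp0, if_neg hp0,
      Real.log_div hp0 hw.ne', Real.log_div hp0 hu.ne', Real.log_div hp0 hv.ne']
    have hR : t * (p * (Real.log p - Real.log u)) + s * (p * (Real.log p - Real.log v))
        = p * Real.log p - p * (t * Real.log u + s * Real.log v) := by
      linear_combination (p * Real.log p) * hts
    rw [hR]
    nlinarith [h2]

lemma klTerm_lt {p u v t s : ℝ} (hp : 0 < p) (hu : 0 < u) (hv : 0 < v) (huv : u ≠ v)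
    (ht : 0 < t) (hs : 0 < s) (hts : t + s = 1) :
    (if p = 0 then 0 else p * Real.log (p / (t * u + s * v)))
      < t * (if p = 0 then 0 else p * Real.log (p / u))
        + s * (if p = 0 then 0 else p * Real.log (p / v)) := by
  have hp0 : p ≠ 0 := hp.ne'
  have hw : 0 < t * u + s * v := by positivity
  have key : t * Real.log u + s * Real.log v < Real.log (t * u + s * v) := by
    have := strictConcaveOn_log_Ioi.2 (Set.mem_Ioi.mpr hu)
      (Set.mem_Ioi.mpr hv) huv ht hs hts
    simpa [smul_eq_mul] using this
  have h2 : p * (t * Real.log u + s * Real.log v) < p * Real.log (t * u + s * v) :=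
    mul_lt_mul_of_pos_left key hp
  rw [if_neg hp0, if_neg hp0, if_neg hp0,
    Real.log_div hp0 hw.ne', Real.log_div hp0 hu.ne', Real.log_div hp0 hv.ne']
  have hR : t * (p * (Real.log p - Real.log u)) + s * (p * (Real.log p - Real.log v))
      = p * Real.log p - p * (t * Real.log u + s * Real.log v) := by
    linear_combination (p * Real.log p) * hts
  rw [hR]
  nlinarith [h2]

/-- if for every j the matrix Σ_r a_{rj} b_r b_r' is symmetric positive definite,
then M̃ ↦ Σ_r D_KL(a_r ‖ M'b_r) is strictly convex on the open convex set of C×(C−1) matrices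
whose completion has strictly positive entries. -/
theorem stmt7 (c : ℕ) (hc : 1 ≤ c) (n : ℕ)
    (a b : Fin n → Fin (c+1) → ℝ)
    (ha : ∀ r, a r ∈ simplex (c+1)) (hb : ∀ r, b r ∈ simplex (c+1))
    (hpd : ∀ j : Fin (c+1),
      (Matrix.of fun i i' : Fin (c+1) => ∑ r, a r j * b r i * b r i').PosDef) :
    StrictConvexOn ℝ {Mt : Fin (c+1) → Fin c → ℝ | ∀ i j, 0 < completeM Mt i j}
      (fun Mt => ∑ r, klReal (a r) (mtv (completeM Mt) (b r))) := by
  classical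
  constructor
  · -- convexity of the set
    intro x hx y hy t s ht hs hts i j
    rw [completeM_comb t s hts]
    rcases eq_or_lt_of_le ht with h | h
    · have hs1 : s = 1 := by linarith
      simpa [← h, hs1] using hy i j
    · have h1 : 0 ≤ s * completeM y i j := mul_nonneg hs (hy i j).le
      have h2 : 0 < t * completeM x i j := mul_pos h (hx i j)
      linarith
  · intro x hx y hy hxy t s ht hs hts
    simp only [Set.mem_setOf_eq] at hx hy
    -- distinguish: find r0 j0 with a r0 j0 > 0 and differing mtv values
    have hdist : ∃ r j, 0 < a r j ∧
        mtv (completeM x) (b r) j ≠ mtv (completeM y) (b r) j := by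
      by_contra hcon
      push_neg at hcon
      have hMeq : ∀ i j, completeM x i j = completeM y i j := by
        intro i1 j
        set v : Fin (c+1) → ℝ := fun i => completeM x i j - completeM y i j with hvdef
        have hv0 : v = 0 := by
          by_contra hv
          have hpos := (hpd j).dotProduct_mulVec_pos hv
          have hform : dotProduct (star v)
              (Matrix.mulVec (Matrix.of fun i i' : Fin (c+1) => ∑ r, a r j * b r i * b r i') v)
                = 0 := by
            have hcalc : dotProduct (star v)
                (Matrix.mulVec (Matrix.of fun i i' : Fin (c+1) => ∑ r, a r j * b r i * b r i') v)
                = ∑ r, a r j * (∑ i, b r i * v i) ^ 2 := by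
              simp only [Matrix.mulVec, dotProduct, Matrix.of_apply, star_trivial,
                Pi.star_apply]
              calc ∑ i, v i * ∑ i', (∑ r, a r j * b r i * b r i') * v i'
                  = ∑ i, ∑ i', ∑ r, v i * (a r j * b r i * b r i' * v i') := by
                    refine Finset.sum_congr rfl fun i _ => ?_
                    rw [Finset.mul_sum]
                    refine Finset.sum_congr rfl fun i' _ => ?_
                    rw [Finset.sum_mul, Finset.mul_sum]
                _ = ∑ r, ∑ i, ∑ i', v i * (a r j * b r i * b r i' * v i') := by
                    rw [Finset.sum_congr rfl fun i (_ : i ∈ Finset.univ) =>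
                      (Finset.sum_comm (s := Finset.univ) (t := Finset.univ)
                        (f := fun i' r => v i * (a r j * b r i * b r i' * v i'))),
                      Finset.sum_comm]
                _ = ∑ r, a r j * (∑ i, b r i * v i) ^ 2 := by
                    refine Finset.sum_congr rfl fun r _ => ?_
                    rw [sq, Finset.sum_mul_sum, Finset.mul_sum]
                    refine Finset.sum_congr rfl fun i _ => ?_
                    rw [Finset.mul_sum]
                    refine Finset.sum_congr rfl fun i' _ => ?_
                    ring
            rw [hcalc]
            refine Finset.sum_eq_zero fun r _ => ?_
            rcases eq_or_lt_of_le ((ha r).1 j) with harj | harj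
            · rw [← harj]; ring
            · have heq := hcon r j harj
              have : ∑ i, b r i * v i = 0 := by
                have : ∑ i, b r i * v i
                    = mtv (completeM x) (b r) j - mtv (completeM y) (b r) j := by
                  unfold mtv
                  rw [← Finset.sum_sub_distrib]
                  refine Finset.sum_congr rfl fun i _ => ?_
                  simp only [hvdef]; ring
                rw [this, heq, sub_self]
              rw [this]; ring
          rw [hform] at hpos
          exact lt_irrefl 0 hpos
        have := congrFun hv0 i1
        simpa [hvdef, sub_eq_zero] using this
      apply hxy
      funext i j
      have h1 := hMeq i (Fin.castSucc j)
      have hlt : ((Fin.castSucc j : Fin (c+1)) : ℕ) < c := j.isLt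
      rw [completeM, completeM, dif_pos hlt, dif_pos hlt] at h1
      convert h1 using 2 <;> exact (Fin.ext rfl)
    obtain ⟨r0, j0, ha0, hne⟩ := hdist
    -- pointwise inequalities
    have hcomb : ∀ r (j : Fin (c+1)),
        mtv (completeM (t • x + s • y)) (b r) j
          = t * mtv (completeM x) (b r) j + s * mtv (completeM y) (b r) j :=
      fun r j => mtv_comb t s hts x y (b r) j
    have hux : ∀ r (j : Fin (c+1)), 0 < mtv (completeM x) (b r) j :=
      fun r j => mtv_pos hx (hb r).1 (hb r).2 j
    have huy : ∀ r (j : Fin (c+1)), 0 < mtv (completeM y) (b r) j :=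
      fun r j => mtv_pos hy (hb r).1 (hb r).2 j
    have hterm_le : ∀ r (j : Fin (c+1)),
        (if a r j = 0 then 0 else
            a r j * Real.log (a r j / mtv (completeM (t • x + s • y)) (b r) j))
          ≤ t * (if a r j = 0 then 0 else
              a r j * Real.log (a r j / mtv (completeM x) (b r) j))
            + s * (if a r j = 0 then 0 else
              a r j * Real.log (a r j / mtv (completeM y) (b r) j)) := by
      intro r j
      rw [hcomb r j]
      exact klTerm_le ((ha r).1 j) (hux r j) (huy r j) ht hs hts
    have hkl_le : ∀ r, klReal (a r) (mtv (completeM (t • x + s • y)) (b r))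
        ≤ t * klReal (a r) (mtv (completeM x) (b r))
          + s * klReal (a r) (mtv (completeM y) (b r)) := by
      intro r
      unfold klReal
      rw [Finset.mul_sum, Finset.mul_sum, ← Finset.sum_add_distrib]
      exact Finset.sum_le_sum fun j _ => hterm_le r j
    have hkl_lt : klReal (a r0) (mtv (completeM (t • x + s • y)) (b r0))
        < t * klReal (a r0) (mtv (completeM x) (b r0))
          + s * klReal (a r0) (mtv (completeM y) (b r0)) := by
      unfold klReal
      rw [Finset.mul_sum, Finset.mul_sum, ← Finset.sum_add_distrib]
      refine Finset.sum_lt_sum (fun j _ => hterm_le r0 j)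
        ⟨j0, Finset.mem_univ j0, ?_⟩
      rw [hcomb r0 j0]
      exact klTerm_lt ha0 (hux r0 j0) (huy r0 j0) hne ht hs hts
    calc ∑ r, klReal (a r) (mtv (completeM (t • x + s • y)) (b r))
        < ∑ r, (t * klReal (a r) (mtv (completeM x) (b r))
            + s * klReal (a r) (mtv (completeM y) (b r))) :=
          Finset.sum_lt_sum (fun r _ => hkl_le r) ⟨r0, Finset.mem_univ r0, hkl_lt⟩
      _ = t • ∑ r, klReal (a r) (mtv (completeM x) (b r))
            + s • ∑ r, klReal (a r) (mtv (completeM y) (b r)) := by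
          rw [Finset.sum_add_distrib, ← Finset.mul_sum, ← Finset.mul_sum]
          simp [smul_eq_mul]


end GBQL
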